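/- arXiv:1612.01170 — 2 statements merged into one kernel-verified Lean document; each statement's English description precedes it below -/
import Mathlib

section
/- Let A be a separable UHF algebra and let φ_j, j ∈ ℕ, be a sequence of separated product states of A. Then the states φ_j are pairwise unitarily nonequivalent; indeed, for all j ≠ l and every n ∈ ℕ there exists a projection p in the relative commutant A_n′ ∩ A with φ_j(p) = 0 and φ_l(p) = 1. -/
noncomputable section

/-- A state: a norm-one positive continuous linear functional. -/
def IsState {B : Type} [NormedRing B] [StarRing B] [NormedAlgebra ℂ B]
    (φ : B →L[ℂ] ℂ) : Prop :=
  ‖φ‖ = 1 ∧ ∀ a : B, 0 ≤ (φ (star a * a)).re ∧ (φ (star a * a)).im = 0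

/-- A pure state: an extreme point of the state space. -/
def IsPureState {B : Type} [NormedRing B] [StarRing B] [NormedAlgebra ℂ B]
    (φ : B →L[ℂ] ℂ) : Prop :=
  φ ∈ Set.extremePoints ℝ {ψ : B →L[ℂ] ℂ | IsState ψ}

/-- Unitary equivalence of states: `ψ = φ ∘ Ad u` for a unitary `u`. -/
def StateUnitarilyEquiv {B : Type} [CStarAlgebra B] (φ ψ : B →L[ℂ] ℂ) : Prop :=
  ∃ u ∈ unitary B, ∀ a : B, ψ a = φ (u * a * star u)

/-- The product projection `q_m · p_{m+1,m} ⋯ p_{m+l,m}`. -/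
def sepProdElem {A : Type} [CStarAlgebra A] (q : ℕ → A) (p : ℕ → ℕ → A) (m : ℕ) :
    ℕ → A
  | 0 => q m
  | l + 1 => sepProdElem q p m l * p (m + l + 1) m

section AuxState
variable {B : Type} [CStarAlgebra B]

theorem state_im_sa (φ : B →L[ℂ] ℂ) (hφ : IsState φ) (h : B) (hh : star h = h) :
    (φ h).im = 0 := by
  have h1 := (hφ.2 (1 + h)).2
  have h2 := (hφ.2 1).2
  have h3 := (hφ.2 h).2
  rw [show star (1 + h) * (1 + h) = 1 + (h + h) + star h * h by
    rw [star_add, star_one, hh]; noncomm_ring] at h1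
  rw [show star (1 : B) * 1 = 1 by simp] at h2
  simp only [map_add, Complex.add_im] at h1
  linarith

theorem state_star (φ : B →L[ℂ] ℂ) (hφ : IsState φ) (x : B) :
    φ (star x) = (starRingEnd ℂ) (φ x) := by
  have h1 : (φ (x + star x)).im = 0 :=
    state_im_sa φ hφ _ (by rw [star_add, star_star, add_comm])
  have h2 : (φ (Complex.I • x + star (Complex.I • x))).im = 0 :=
    state_im_sa φ hφ _ (by rw [star_add, star_star, add_comm])
  have h3 : star (Complex.I • x) = (-Complex.I) • star x := by
    rw [star_smul]; congr 1; simp [Complex.ext_iff]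
  rw [h3] at h2
  rw [map_add] at h1
  rw [map_add, map_smul, map_smul] at h2
  set s := φ x
  set t := φ (star x)
  simp only [Complex.add_im, smul_eq_mul, Complex.mul_im, Complex.I_re, Complex.I_im,
    Complex.neg_re, Complex.neg_im, neg_mul, neg_neg] at h1 h2
  apply Complex.ext <;> simp [Complex.conj_re, Complex.conj_im] <;> linarith

theorem state_cs (φ : B →L[ℂ] ℂ) (hφ : IsState φ) (x y : B) :
    ‖φ (star x * y)‖ ^ 2 ≤ (φ (star x * x)).re * (φ (star y * y)).re := by
  set W := φ (star x * y) with hW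
  set P := (φ (star x * x)).re with hPdef
  set Q := (φ (star y * y)).re with hQdef
  have hP0 : 0 ≤ P := (hφ.2 x).1
  have hQ0 : 0 ≤ Q := (hφ.2 y).1
  have hPx : φ (star x * x) = (P : ℂ) := Complex.ext rfl (by simpa using (hφ.2 x).2)
  have hQy : φ (star y * y) = (Q : ℂ) := Complex.ext rfl (by simpa using (hφ.2 y).2)
  have hyx : φ (star y * x) = (starRingEnd ℂ) W := by
    rw [← state_star φ hφ (star x * y), star_mul, star_star]
  have key : ∀ s : ℝ, 0 ≤ s ^ 2 * ‖W‖ ^ 2 * P - 2 * s * ‖W‖ ^ 2 + Q := by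
    intro s
    set t : ℂ := -(s : ℂ) * W with ht
    have hexp : star (t • x + y) * (t • x + y)
        = (t * star t) • (star x * x) + star t • (star x * y) + t • (star y * x)
          + star y * y := by
      rw [star_add, star_smul]
      simp only [add_mul, mul_add, smul_mul_assoc, mul_smul_comm, smul_smul, smul_add,
        add_assoc]
      abel
    have h := (hφ.2 (t • x + y)).1
    rw [hexp] at h
    simp only [map_add, map_smul, smul_eq_mul] at h
    rw [hPx, hQy, hyx, hW] at h
    have hst : star t = -(s : ℂ) * (starRingEnd ℂ) W := by
      rw [ht]; simp [Complex.ext_iff]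
    have hWW : (starRingEnd ℂ) W * W = ((‖W‖ ^ 2 : ℝ) : ℂ) := by
      rw [RCLike.conj_mul]; norm_cast
    have hcalc : t * star t * (P : ℂ) + star t * φ (star x * y) + t * (starRingEnd ℂ) (φ (star x * y))
        + (Q : ℂ) = ((s ^ 2 * ‖W‖ ^ 2 * P - 2 * s * ‖W‖ ^ 2 + Q : ℝ) : ℂ) := by
      rw [← hW, hst, ht]
      have h1 : (-(s:ℂ) * W) * (-(s:ℂ) * (starRingEnd ℂ) W) = ((s^2 * ‖W‖^2 : ℝ) : ℂ) := by
        rw [show (-(s:ℂ) * W) * (-(s:ℂ) * (starRingEnd ℂ) W)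
          = (s:ℂ)^2 * ((starRingEnd ℂ) W * W) by ring, hWW]; push_cast; ring
      have h2 : (-(s:ℂ) * (starRingEnd ℂ) W) * W = -((s:ℂ) * ((‖W‖^2:ℝ):ℂ)) := by
        rw [show (-(s:ℂ) * (starRingEnd ℂ) W) * W = -((s:ℂ) * ((starRingEnd ℂ) W * W)) by ring,
          hWW]
      have h3 : (-(s:ℂ) * W) * (starRingEnd ℂ) W = -((s:ℂ) * ((‖W‖^2:ℝ):ℂ)) := by
        rw [show (-(s:ℂ) * W) * (starRingEnd ℂ) W = -((s:ℂ) * ((starRingEnd ℂ) W * W)) by ring,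
          hWW]
      rw [h1, h2, h3]; push_cast; ring
    rw [hcalc] at h
    rwa [Complex.ofReal_re] at h
  by_cases hb : ‖W‖ = 0
  · rw [hb]; simpa using mul_nonneg hP0 hQ0
  · have hb2 : (0:ℝ) < ‖W‖ ^ 2 := by positivity
    by_cases hP : P = 0
    · exfalso
      have h := key ((Q + 1) / (2 * ‖W‖ ^ 2))
      rw [hP] at h
      have hval : (Q + 1) / (2 * ‖W‖ ^ 2) * ‖W‖ ^ 2 = (Q + 1) / 2 := by
        have hbne : ‖W‖ ^ 2 ≠ 0 := ne_of_gt hb2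
        rw [← div_div, div_mul_cancel₀ _ hbne]
      nlinarith [h, hval]
    · have hPpos : 0 < P := lt_of_le_of_ne hP0 (Ne.symm hP)
      have h := key (1 / P)
      have h' := mul_nonneg hPpos.le h
      have hexp : P * ((1/P) ^ 2 * ‖W‖ ^ 2 * P - 2 * (1/P) * ‖W‖ ^ 2 + Q)
          = ‖W‖ ^ 2 - 2 * ‖W‖ ^ 2 + P * Q := by
        field_simp
      rw [hexp] at h'
      linarith

theorem state_norm_le (φ : B →L[ℂ] ℂ) (hφ : IsState φ) (x : B) : ‖φ x‖ ≤ ‖x‖ := by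
  calc ‖φ x‖ ≤ ‖φ‖ * ‖x‖ := φ.le_opNorm x
  _ = ‖x‖ := by rw [hφ.1, one_mul]

theorem state_one (φ : B →L[ℂ] ℂ) (hφ : IsState φ) : φ 1 = 1 := by
  have hnt : Nontrivial B := by
    by_contra hc
    rw [not_nontrivial_iff_subsingleton] at hc
    have hz : φ = 0 := by ext x; rw [Subsingleton.elim x 0]; simp
    have h1 := hφ.1
    rw [hz, norm_zero] at h1
    exact one_ne_zero h1.symm
  have him : (φ 1).im = 0 := by
    have := (hφ.2 1).2; rwa [star_one, one_mul] at this
  have hre0 : 0 ≤ (φ 1).re := by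
    have := (hφ.2 1).1; rwa [star_one, one_mul] at this
  have hle : (φ 1).re ≤ 1 := by
    calc (φ 1).re ≤ ‖φ 1‖ := by exact Complex.re_le_norm _
    _ ≤ ‖(1:B)‖ := state_norm_le φ hφ 1
    _ = 1 := norm_one
  have hge : 1 ≤ (φ 1).re := by
    set c := (φ 1).re with hc
    have hb : ∀ y : B, ‖φ y‖ ≤ Real.sqrt c * ‖y‖ := by
      intro y
      have h1 := state_cs φ hφ 1 y
      rw [star_one, one_mul, one_mul] at h1
      have h2 : (φ (star y * y)).re ≤ ‖y‖ ^ 2 := by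
        calc (φ (star y * y)).re ≤ ‖φ (star y * y)‖ := by
              exact Complex.re_le_norm _
        _ ≤ ‖star y * y‖ := state_norm_le φ hφ _
        _ = ‖y‖ ^ 2 := by rw [CStarRing.norm_star_mul_self]; ring
      have h3 : ‖φ y‖ ^ 2 ≤ c * ‖y‖ ^ 2 := by
        nlinarith [(hφ.2 y).1]
      have h4 := Real.sqrt_le_sqrt h3
      rwa [Real.sqrt_sq (norm_nonneg _), Real.sqrt_mul hre0, Real.sqrt_sq (norm_nonneg _)] at h4
    have h5 : ‖φ‖ ≤ Real.sqrt c := φ.opNorm_le_bound (Real.sqrt_nonneg c) hb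
    rw [hφ.1] at h5
    nlinarith [Real.sq_sqrt hre0, Real.sqrt_nonneg c]
  have hre := le_antisymm hle hge
  exact Complex.ext (by simpa using hre) (by simpa using him)

theorem state_proj (φ : B →L[ℂ] ℂ) (hφ : IsState φ) (e : B) (he1 : star e = e)
    (he2 : e * e = e) (he3 : φ e = 1) :
    (∀ a, φ (e * a) = φ a) ∧ (∀ a, φ (a * e) = φ a) := by
  set f := 1 - e with hf
  have hf1 : star f = f := by rw [hf, star_sub, star_one, he1]
  have hf2 : f * f = f := by
    have h' : (1 - e) * (1 - e) = 1 - e - e + e * e := by noncomm_ring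
    rw [hf, h', he2]; abel
  have hφf : φ f = 0 := by rw [hf, map_sub, state_one φ hφ, he3, sub_self]
  have left : ∀ a, φ (f * a) = 0 := by
    intro a
    have h := state_cs φ hφ f a
    rw [hf1, hf2, hφf] at h
    rw [Complex.zero_re, zero_mul] at h
    have h0 : ‖φ (f * a)‖ ≤ 0 := by nlinarith [norm_nonneg (φ (f * a))]
    exact norm_le_zero_iff.mp h0
  have right : ∀ a, φ (a * f) = 0 := by
    intro a
    have h := left (star a)
    have h2 := state_star φ hφ (f * star a)
    rw [h, map_zero] at h2
    rwa [star_mul, star_star, hf1] at h2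
  constructor
  · intro a
    have hea : e * a = a - f * a := by rw [hf]; noncomm_ring
    rw [hea, map_sub, left a, sub_zero]
  · intro a
    have hae : a * e = a - a * f := by rw [hf]; noncomm_ring
    rw [hae, map_sub, right a, sub_zero]

theorem proj_norm_le (e : B) (he1 : star e = e) (he2 : e * e = e) : ‖e‖ ≤ 1 := by
  have h : ‖e‖ * ‖e‖ = ‖e‖ := by
    rw [← CStarRing.norm_star_mul_self, he1, he2]
  nlinarith [norm_nonneg e]

theorem unitary_norm_one (u : B) (hu : star u * u = 1) (hnt : (1:B) ≠ 0) : ‖u‖ = 1 := by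
  have h : ‖u‖ * ‖u‖ = 1 := by
    have hnt' : Nontrivial B := nontrivial_of_ne 1 0 hnt
    rw [← CStarRing.norm_star_mul_self, hu, norm_one]
  have h0 : 0 ≤ ‖u‖ := norm_nonneg u
  nlinarith [sq_nonneg (‖u‖ - 1), sq_nonneg (‖u‖ + 1)]


end AuxState

/-- **Lemma.** Let `A` be a separable UHF algebra and let `φ_j`, `j ∈ ℕ`, be a
sequence of separated product states of `A` (the witnessing data — the chain `Aₙ`
of matrix subalgebras with dense union identifying `A` with `⨂ₙ M_{k(n)}(ℂ)`, the
orthogonal rank-one projections `p_{n,j}` in the `n`-th tensor factor, and the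
rank-one projections `q_m ∈ A_m` — are given explicitly as hypotheses).  Then the
states `φ_j` are pairwise unitarily nonequivalent; indeed for all `j ≠ l` and every
`n` there is a projection `p` in the relative commutant `Aₙ' ∩ A` with
`φ_j(p) = 0` and `φ_l(p) = 1`. -/
theorem separated_product_states_pairwise_inequivalent
    (A : Type) [CStarAlgebra A] [TopologicalSpace.SeparableSpace A]
    (k : ℕ → ℕ) (An : ℕ → StarSubalgebra ℂ A) (p : ℕ → ℕ → A) (q : ℕ → A)
    (φ : ℕ → (A →L[ℂ] ℂ))
    (hk : ∀ n, 1 ≤ k n) (hmono : Monotone An)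
    (hdense : Dense (⋃ n, (An n : Set A)))
    (hiso : ∀ n, Nonempty (An n ≃⋆ₐ[ℂ] Matrix (Fin (∏ j ∈ Finset.range n, k j))
      (Fin (∏ j ∈ Finset.range n, k j)) ℂ))
    (hp : ∀ n, ∀ j < n, p n j ∈ An (n + 1) ∧ (∀ y ∈ An n, Commute (p n j) y) ∧
      IsSelfAdjoint (p n j) ∧ p n j * p n j = p n j ∧ p n j ≠ 0)
    (hporth : ∀ n, ∀ j < n, ∀ j' < n, j ≠ j' → p n j * p n j' = 0)
    (hprank1 : ∀ n, ∀ j < n, ∀ z ∈ An (n + 1), (∀ y ∈ An n, Commute z y) →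
      ∃ c : ℂ, p n j * z * p n j = c • p n j)
    (hq : ∀ m, q m ∈ An m ∧ IsSelfAdjoint (q m) ∧ q m * q m = q m ∧ q m ≠ 0 ∧
      ∀ z ∈ An m, ∃ c : ℂ, q m * z * q m = c • q m)
    (hφpure : ∀ m, IsPureState (φ m))
    (hφone : ∀ m, ∀ l, 1 ≤ l → φ m (sepProdElem q p m l) = 1) :
    (∀ j l, j ≠ l → ¬ StateUnitarilyEquiv (φ j) (φ l)) ∧
      ∀ j l, j ≠ l → ∀ n : ℕ, ∃ pr : A, (∀ y ∈ An n, Commute pr y) ∧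
        IsSelfAdjoint pr ∧ pr * pr = pr ∧ φ j pr = 0 ∧ φ l pr = 1 := by
  have hstate : ∀ m, IsState (φ m) := fun m => (hφpure m).1
  -- basic properties of the partial products
  have sepprop : ∀ m l, sepProdElem q p m l ∈ An (m + l + 1) ∧
      star (sepProdElem q p m l) = sepProdElem q p m l ∧
      sepProdElem q p m l * sepProdElem q p m l = sepProdElem q p m l := by
    intro m l
    induction l with
    | zero =>
      obtain ⟨hm, hsa, hid, -⟩ := hq m
      exact ⟨hmono (Nat.le_succ m) hm, hsa.star_eq, hid⟩
    | succ l ih =>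
      obtain ⟨hmem, hsa, hid⟩ := ih
      obtain ⟨hpmem, hpcomm, hpsa, hpid, -⟩ := hp (m + l + 1) m (by omega)
      have hc : p (m + l + 1) m * sepProdElem q p m l
          = sepProdElem q p m l * p (m + l + 1) m := (hpcomm _ hmem).eq
      have hstep : sepProdElem q p m (l + 1)
          = sepProdElem q p m l * p (m + l + 1) m := rfl
      refine ⟨?_, ?_, ?_⟩
      · rw [hstep]
        exact mul_mem (hmono (Nat.le_succ _) hmem) hpmem
      · rw [hstep, star_mul, hpsa.star_eq, hsa, hc]
      · rw [hstep]
        calc sepProdElem q p m l * p (m + l + 1) m * (sepProdElem q p m l * p (m + l + 1) m)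
            = sepProdElem q p m l * (p (m + l + 1) m * sepProdElem q p m l)
              * p (m + l + 1) m := by simp only [mul_assoc]
        _ = sepProdElem q p m l * (sepProdElem q p m l * p (m + l + 1) m)
              * p (m + l + 1) m := by rw [hc]
        _ = sepProdElem q p m l * sepProdElem q p m l
              * (p (m + l + 1) m * p (m + l + 1) m) := by simp only [mul_assoc]
        _ = sepProdElem q p m l * p (m + l + 1) m := by rw [hid, hpid]
  -- the key projection values
  have keyE : ∀ m N, m < N → ∃ E' : A, E' ∈ An N ∧
      star (E' * p N m) = E' * p N m ∧
      (E' * p N m) * (E' * p N m) = E' * p N m ∧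
      φ m (E' * p N m) = 1 := by
    intro m N hmN
    obtain ⟨l', hl'⟩ : ∃ l', N - m = l' + 1 := ⟨N - m - 1, by omega⟩
    have hidx : m + l' + 1 = N := by omega
    have heq : sepProdElem q p m (N - m) = sepProdElem q p m l' * p N m := by
      rw [hl']
      show sepProdElem q p m l' * p (m + l' + 1) m = _
      rw [hidx]
    refine ⟨sepProdElem q p m l', ?_, ?_, ?_, ?_⟩
    · have h := (sepprop m l').1
      rwa [hidx] at h
    · have h := (sepprop m (N - m)).2.1
      rwa [heq] at h
    · have h := (sepprop m (N - m)).2.2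
      rwa [heq] at h
    · have h := hφone m (N - m) (by omega)
      rwa [heq] at h
  have keyone : ∀ m N, m < N → φ m (p N m) = 1 := by
    intro m N h
    obtain ⟨E', hE'mem, hsa, hid, hone⟩ := keyE m N h
    have hproj := state_proj (φ m) (hstate m) _ hsa hid hone
    obtain ⟨hpm, hpc, hpsa, hpid, -⟩ := hp N m h
    have hEp : (E' * p N m) * p N m = E' * p N m := by rw [mul_assoc, hpid]
    have h2 := hproj.1 (p N m)
    rw [hEp, hone] at h2
    exact h2.symm
  have keyzero : ∀ j l N, j < N → l < N → j ≠ l → φ j (p N l) = 0 := by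
    intro j l N hj hl hjl
    obtain ⟨E', hE'mem, hsa, hid, hone⟩ := keyE j N hj
    have hproj := state_proj (φ j) (hstate j) _ hsa hid hone
    have horth := hporth N j hj l hl hjl
    have hz : (E' * p N j) * p N l = 0 := by rw [mul_assoc, horth, mul_zero]
    have h2 := hproj.1 (p N l)
    rw [hz, map_zero] at h2
    exact h2.symm
  -- part 2
  have part2 : ∀ j l, j ≠ l → ∀ n : ℕ, ∃ pr : A, (∀ y ∈ An n, Commute pr y) ∧
      IsSelfAdjoint pr ∧ pr * pr = pr ∧ φ j pr = 0 ∧ φ l pr = 1 := by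
    intro j l hjl n
    set N := max n (max j l) + 1 with hN
    obtain ⟨hpm, hpc, hpsa, hpid, -⟩ := hp N l (by omega)
    exact ⟨p N l, fun y hy => hpc y (hmono (by omega) hy), hpsa, hpid,
      keyzero j l N (by omega) (by omega) hjl, keyone l N (by omega)⟩
  refine ⟨?_, part2⟩
  -- part 1
  rintro j l hjl ⟨u, hu, hequiv⟩
  have hu1 : star u * u = 1 := Unitary.star_mul_self_of_mem hu
  have hu2 : u * star u = 1 := Unitary.mul_star_self_of_mem hu
  have hone_ne : (1 : A) ≠ 0 := by
    intro h10
    have hz : ∀ x : A, x = 0 := fun x => by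
      calc x = x * 1 := (mul_one x).symm
      _ = x * 0 := by rw [h10]
      _ = 0 := mul_zero x
    have h1 := (hstate j).1
    have : φ j = 0 := by ext x; rw [hz x]; simp
    rw [this, norm_zero] at h1
    exact one_ne_zero h1.symm
  have hnu : ‖u‖ = 1 := unitary_norm_one u hu1 hone_ne
  obtain ⟨a, ha, hdista⟩ := hdense.exists_dist_lt u (by norm_num : (0:ℝ) < 1/8)
  obtain ⟨n, han'⟩ := Set.mem_iUnion.mp ha
  obtain ⟨pr, hprc, hprsa, hprid, hj0, hl1⟩ := part2 j l hjl n
  have hε : ‖u - a‖ < 1/8 := by rwa [← dist_eq_norm]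
  set ε := ‖u - a‖ with hεdef
  have hε0 : 0 ≤ ε := norm_nonneg _
  have hpr1 : ‖pr‖ ≤ 1 := proj_norm_le pr hprsa.star_eq hprid
  have hca : pr * a = a * pr := (hprc a han').eq
  have hna : ‖a‖ ≤ 1 + ε := by
    calc ‖a‖ = ‖u - (u - a)‖ := by rw [sub_sub_cancel]
    _ ≤ ‖u‖ + ‖u - a‖ := norm_sub_le _ _
    _ = 1 + ε := by rw [hnu]
  have hstar_sub : ‖star u - star a‖ = ε := by
    rw [← star_sub, norm_star]
  have e1 : ‖u * pr * star u - a * pr * star a‖ ≤ ε + (1 + ε) * ε := by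
    have hidd : u * pr * star u - a * pr * star a
        = (u - a) * pr * star u + a * pr * (star u - star a) := by noncomm_ring
    calc ‖u * pr * star u - a * pr * star a‖
        ≤ ‖(u - a) * pr * star u‖ + ‖a * pr * (star u - star a)‖ := by
          rw [hidd]; exact norm_add_le _ _
    _ ≤ ε + (1 + ε) * ε := by
        have b1 : ‖(u - a) * pr * star u‖ ≤ ε * 1 * 1 := by
          calc ‖(u - a) * pr * star u‖ ≤ ‖(u - a) * pr‖ * ‖star u‖ := norm_mul_le _ _
          _ ≤ ‖u - a‖ * ‖pr‖ * ‖star u‖ :=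
              mul_le_mul_of_nonneg_right (norm_mul_le _ _) (norm_nonneg _)
          _ ≤ ε * 1 * 1 := by
              rw [norm_star, hnu]
              exact mul_le_mul_of_nonneg_right
                (mul_le_mul_of_nonneg_left hpr1 hε0) (by norm_num)
        have b2 : ‖a * pr * (star u - star a)‖ ≤ (1 + ε) * 1 * ε := by
          calc ‖a * pr * (star u - star a)‖
              ≤ ‖a * pr‖ * ‖star u - star a‖ := norm_mul_le _ _
          _ ≤ ‖a‖ * ‖pr‖ * ‖star u - star a‖ :=
              mul_le_mul_of_nonneg_right (norm_mul_le _ _) (norm_nonneg _)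
          _ ≤ (1 + ε) * 1 * ε := by
              rw [hstar_sub]
              exact mul_le_mul_of_nonneg_right
                (mul_le_mul hna hpr1 (norm_nonneg _) (by linarith)) hε0
        nlinarith [b1, b2]
  have e2 : ‖pr * (a * star a) - pr‖ ≤ ε * (1 + ε) + ε := by
    have h1 : pr * (a * star a) - pr = pr * (a * star a - u * star u) := by
      rw [mul_sub, hu2, mul_one]
    have h2 : a * star a - u * star u = (a - u) * star a + u * (star a - star u) := by
      noncomm_ring
    calc ‖pr * (a * star a) - pr‖ = ‖pr * (a * star a - u * star u)‖ := by rw [h1]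
    _ ≤ ‖pr‖ * ‖a * star a - u * star u‖ := norm_mul_le _ _
    _ ≤ 1 * ‖a * star a - u * star u‖ :=
        mul_le_mul_of_nonneg_right hpr1 (norm_nonneg _)
    _ = ‖(a - u) * star a + u * (star a - star u)‖ := by rw [one_mul, h2]
    _ ≤ ‖(a - u) * star a‖ + ‖u * (star a - star u)‖ := norm_add_le _ _
    _ ≤ ε * (1 + ε) + ε := by
        have b1 : ‖(a - u) * star a‖ ≤ ε * (1 + ε) := by
          calc ‖(a - u) * star a‖ ≤ ‖a - u‖ * ‖star a‖ := norm_mul_le _ _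
          _ ≤ ε * (1 + ε) := by
              rw [norm_sub_rev, norm_star]
              exact mul_le_mul_of_nonneg_left hna hε0
        have b2 : ‖u * (star a - star u)‖ ≤ ε := by
          calc ‖u * (star a - star u)‖ ≤ ‖u‖ * ‖star a - star u‖ := norm_mul_le _ _
          _ = ε := by rw [hnu, one_mul, norm_sub_rev, hstar_sub]
        linarith
  have e3 : a * pr * star a = pr * (a * star a) := by
    rw [← hca, mul_assoc]
  have hsplit : φ j (u * pr * star u) =
      φ j (u * pr * star u - a * pr * star a) + φ j (pr * (a * star a) - pr) + φ j pr := by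
    rw [← map_add, ← map_add]
    congr 1
    rw [← e3]
    abel
  have habs : ∀ x, ‖(φ j) x‖ ≤ ‖x‖ := state_norm_le (φ j) (hstate j)
  have hone' : (1 : ℝ) = ‖φ j (u * pr * star u)‖ := by
    rw [← hequiv pr, hl1, norm_one]
  have hfinal : (1 : ℝ) ≤ (ε + (1 + ε) * ε) + (ε * (1 + ε) + ε) + 0 := by
    calc (1 : ℝ) = ‖φ j (u * pr * star u)‖ := hone'
    _ = ‖φ j (u * pr * star u - a * pr * star a) + φ j (pr * (a * star a) - pr) + φ j pr‖ := by
          rw [hsplit]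
    _
        ≤ ‖φ j (u * pr * star u - a * pr * star a) + φ j (pr * (a * star a) - pr)‖
          + ‖φ j pr‖ := norm_add_le _ _
    _ ≤ ‖φ j (u * pr * star u - a * pr * star a)‖ + ‖φ j (pr * (a * star a) - pr)‖
          + ‖φ j pr‖ := by gcongr; exact norm_add_le _ _
    _ ≤ (ε + (1 + ε) * ε) + (ε * (1 + ε) + ε) + 0 := by
        have c1 := le_trans (habs _) e1
        have c2 := le_trans (habs _) e2
        have c3 : ‖φ j pr‖ = 0 := by rw [hj0, norm_zero]
        rw [c3]
        linarith [c1, c2]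
  nlinarith [hfinal, hε, hε0]

end
end

section
/- Let δ > 0 and let f, g : [0,1] → [0,1] be continuous functions with f(0) = g(0) = 0. Then there exists ε > 0 such that for every C*-algebra A, all positive contractions x, y ∈ A, and every contraction z ∈ A, the inequality ‖xzy‖ < ε implies ‖f(x) z g(y)‖ < δ. -/
noncomputable section

open Polynomial in
lemma poly_prod_norm_le {A : Type} [CStarAlgebra A] (p q : ℝ[X])
    (hp : p.coeff 0 = 0) (hq : q.coeff 0 = 0) (x y z : A)
    (hx : ‖x‖ ≤ 1) (hy : ‖y‖ ≤ 1) :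
    ‖aeval x p * z * aeval y q‖ ≤
      (∑ i ∈ Finset.range (p.natDegree + 1), |p.coeff i|) *
      (∑ j ∈ Finset.range (q.natDegree + 1), |q.coeff j|) * ‖x * z * y‖ := by
  rcases subsingleton_or_nontrivial A with hA | hA
  · rw [Subsingleton.elim (aeval x p * z * aeval y q) 0, norm_zero]
    positivity
  rw [aeval_eq_sum_range, aeval_eq_sum_range, Finset.sum_mul, Finset.sum_mul]
  simp_rw [Finset.mul_sum]
  calc ‖∑ i ∈ Finset.range (p.natDegree + 1), ∑ j ∈ Finset.range (q.natDegree + 1),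
          p.coeff i • x ^ i * z * (q.coeff j • y ^ j)‖
      ≤ ∑ i ∈ Finset.range (p.natDegree + 1), ∑ j ∈ Finset.range (q.natDegree + 1),
          |p.coeff i| * |q.coeff j| * ‖x * z * y‖ := by
        refine (norm_sum_le _ _).trans (Finset.sum_le_sum fun i _ => ?_)
        refine (norm_sum_le _ _).trans (Finset.sum_le_sum fun j _ => ?_)
        have heq : p.coeff i • x ^ i * z * (q.coeff j • y ^ j)
            = (p.coeff i * q.coeff j) • (x ^ i * z * y ^ j) := by
          rw [smul_mul_assoc, smul_mul_assoc, mul_smul_comm, smul_smul]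
        rw [heq, norm_smul, Real.norm_eq_abs, abs_mul]
        rcases Nat.eq_zero_or_pos i with hi | hi
        · subst hi; simp [hp]
        rcases Nat.eq_zero_or_pos j with hj | hj
        · subst hj; simp [hq]
        obtain ⟨i', rfl⟩ := Nat.exists_eq_succ_of_ne_zero hi.ne'
        obtain ⟨j', rfl⟩ := Nat.exists_eq_succ_of_ne_zero hj.ne'
        have key : x ^ (i' + 1) * z * y ^ (j' + 1) = x ^ i' * (x * z * y) * y ^ j' := by
          rw [pow_succ, pow_succ']
          noncomm_ring
        rw [Nat.succ_eq_add_one, key]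
        have h2 : ‖x ^ i' * (x * z * y) * y ^ j'‖ ≤ ‖x * z * y‖ := by
          calc ‖x ^ i' * (x * z * y) * y ^ j'‖
              ≤ ‖x ^ i'‖ * ‖x * z * y‖ * ‖y ^ j'‖ :=
                (norm_mul_le _ _).trans (by gcongr; exact norm_mul_le _ _)
            _ ≤ 1 * ‖x * z * y‖ * 1 := by
                gcongr
                · exact (norm_pow_le x i').trans (pow_le_one₀ (norm_nonneg x) hx)
                · exact (norm_pow_le y j').trans (pow_le_one₀ (norm_nonneg y) hy)
            _ = ‖x * z * y‖ := by ring
        exact mul_le_mul_of_nonneg_left h2 (by positivity)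
      _ = _ := by
        rw [Finset.sum_comm, Finset.sum_mul]
        exact Finset.sum_congr rfl fun j _ => by rw [Finset.sum_mul, Finset.sum_mul]




/-- **Lemma.** Let `δ > 0` and let `f, g : [0,1] → [0,1]` be continuous with
`f 0 = g 0 = 0` (encoded as continuous real functions mapping `[0,1]` to `[0,1]`,
applied by continuous functional calculus).  There is an `ε > 0` such that for
every C*-algebra `A`, all positive contractions `x, y ∈ A` and every contraction
`z ∈ A`, `‖x z y‖ < ε` implies `‖f(x) z g(y)‖ < δ`. -/
theorem uniform_functional_calculus_smallness
    (δ : ℝ) (hδ : 0 < δ) (f g : ℝ → ℝ)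
    (hfc : Continuous f) (hgc : Continuous g)
    (hfmap : Set.MapsTo f (Set.Icc (0:ℝ) 1) (Set.Icc (0:ℝ) 1))
    (hgmap : Set.MapsTo g (Set.Icc (0:ℝ) 1) (Set.Icc (0:ℝ) 1))
    (hf0 : f 0 = 0) (hg0 : g 0 = 0) :
    ∃ ε > (0:ℝ), ∀ (A : Type) (_ : CStarAlgebra A) (x y z : A),
      (∃ w : A, x = star w * w) → ‖x‖ ≤ 1 →
      (∃ w : A, y = star w * w) → ‖y‖ ≤ 1 →
      ‖z‖ ≤ 1 → ‖x * z * y‖ < ε →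
      ‖cfc f x * z * cfc g y‖ < δ := by
  set η : ℝ := min (δ/8) (1/2) with hηdef
  have hη : 0 < η := lt_min (by linarith) (by norm_num)
  have hη8 : η ≤ δ/8 := min_le_left _ _
  have hηhalf : η ≤ 1/2 := min_le_right _ _
  obtain ⟨p₀, hp₀⟩ := exists_polynomial_near_of_continuousOn 0 1 f hfc.continuousOn η hη
  obtain ⟨q₀, hq₀⟩ := exists_polynomial_near_of_continuousOn 0 1 g hgc.continuousOn η hη
  set p : Polynomial ℝ := p₀ - Polynomial.C (p₀.coeff 0) with hpdef
  set q : Polynomial ℝ := q₀ - Polynomial.C (q₀.coeff 0) with hqdef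
  have hp0 : p.coeff 0 = 0 := by simp [hpdef]
  have hq0 : q.coeff 0 = 0 := by simp [hqdef]
  have hc0p : |p₀.coeff 0| < η := by
    have := hp₀ 0 (by norm_num)
    rwa [hf0, sub_zero, ← Polynomial.coeff_zero_eq_eval_zero] at this
  have hc0q : |q₀.coeff 0| < η := by
    have := hq₀ 0 (by norm_num)
    rwa [hg0, sub_zero, ← Polynomial.coeff_zero_eq_eval_zero] at this
  have hpapp : ∀ t ∈ Set.Icc (0:ℝ) 1, |p.eval t - f t| ≤ 2 * η := by
    intro t ht
    have h1 := hp₀ t ht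
    have : p.eval t = p₀.eval t - p₀.coeff 0 := by simp [hpdef]
    rw [this]
    calc |p₀.eval t - p₀.coeff 0 - f t| ≤ |p₀.eval t - f t| + |p₀.coeff 0| := by
          rw [sub_right_comm]; exact abs_sub _ _
      _ ≤ 2 * η := by linarith
  have hqapp : ∀ t ∈ Set.Icc (0:ℝ) 1, |q.eval t - g t| ≤ 2 * η := by
    intro t ht
    have h1 := hq₀ t ht
    have : q.eval t = q₀.eval t - q₀.coeff 0 := by simp [hqdef]
    rw [this]
    calc |q₀.eval t - q₀.coeff 0 - g t| ≤ |q₀.eval t - g t| + |q₀.coeff 0| := by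
          rw [sub_right_comm]; exact abs_sub _ _
      _ ≤ 2 * η := by linarith
  set S1 : ℝ := ∑ i ∈ Finset.range (p.natDegree + 1), |p.coeff i| with hS1def
  set S2 : ℝ := ∑ j ∈ Finset.range (q.natDegree + 1), |q.coeff j| with hS2def
  have hS1 : 0 ≤ S1 := Finset.sum_nonneg fun _ _ => abs_nonneg _
  have hS2 : 0 ≤ S2 := Finset.sum_nonneg fun _ _ => abs_nonneg _
  refine ⟨δ / (4 * (S1 * S2 + 1)), by positivity, ?_⟩
  intro A instA x y z hxpos hx1 hypos hy1 hz1 hlt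
  rcases subsingleton_or_nontrivial A with hA | hA
  · rw [Subsingleton.elim (cfc f x * z * cfc g y) 0, norm_zero]; exact hδ
  obtain ⟨w, hw⟩ := hxpos
  obtain ⟨v, hv⟩ := hypos
  have hx_sa : IsSelfAdjoint x := hw ▸ IsSelfAdjoint.star_mul_self w
  have hy_sa : IsSelfAdjoint y := hv ▸ IsSelfAdjoint.star_mul_self v
  have hx_nn : ∀ t ∈ spectrum ℝ x, (0:ℝ) ≤ t := hw ▸ spectrum_star_mul_self_nonneg
  have hy_nn : ∀ t ∈ spectrum ℝ y, (0:ℝ) ≤ t := hv ▸ spectrum_star_mul_self_nonneg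
  have spec_x : spectrum ℝ x ⊆ Set.Icc (0:ℝ) 1 := fun t ht =>
    ⟨hx_nn t ht,
     le_trans (le_abs_self t) (le_trans (Real.norm_eq_abs t ▸ spectrum.norm_le_norm_of_mem ht) hx1)⟩
  have spec_y : spectrum ℝ y ⊆ Set.Icc (0:ℝ) 1 := fun t ht =>
    ⟨hy_nn t ht,
     le_trans (le_abs_self t) (le_trans (Real.norm_eq_abs t ▸ spectrum.norm_le_norm_of_mem ht) hy1)⟩
  have hfx : ‖cfc f x‖ ≤ 1 := by
    refine norm_cfc_le zero_le_one fun t ht => ?_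
    have := hfmap (spec_x ht)
    rw [Real.norm_eq_abs, abs_le]
    exact ⟨by linarith [this.1], this.2⟩
  have hgy : ‖cfc g y‖ ≤ 1 := by
    refine norm_cfc_le zero_le_one fun t ht => ?_
    have := hgmap (spec_y ht)
    rw [Real.norm_eq_abs, abs_le]
    exact ⟨by linarith [this.1], this.2⟩
  have hdf : ‖cfc f x - Polynomial.aeval x p‖ ≤ 2 * η := by
    rw [← cfc_polynomial p x, ← cfc_sub f p.eval x (hfc.continuousOn) (by fun_prop)]
    refine norm_cfc_le (by positivity) fun t ht => ?_
    rw [Real.norm_eq_abs, abs_sub_comm]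
    exact hpapp t (spec_x ht)
  have hdg : ‖cfc g y - Polynomial.aeval y q‖ ≤ 2 * η := by
    rw [← cfc_polynomial q y, ← cfc_sub g q.eval y (hgc.continuousOn) (by fun_prop)]
    refine norm_cfc_le (by positivity) fun t ht => ?_
    rw [Real.norm_eq_abs, abs_sub_comm]
    exact hqapp t (spec_y ht)
  have hpx : ‖Polynomial.aeval x p‖ ≤ 2 := by
    have : Polynomial.aeval x p = cfc f x - (cfc f x - Polynomial.aeval x p) := (sub_sub_cancel _ _).symm
    rw [this]
    calc ‖cfc f x - (cfc f x - Polynomial.aeval x p)‖ ≤ ‖cfc f x‖ + ‖cfc f x - Polynomial.aeval x p‖ :=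
          norm_sub_le _ _
      _ ≤ 1 + 2 * η := by gcongr
      _ ≤ 2 := by linarith
  have hmul : ∀ a b c : A, ‖a * b * c‖ ≤ ‖a‖ * ‖b‖ * ‖c‖ := fun a b c =>
    (norm_mul_le _ _).trans (mul_le_mul_of_nonneg_right (norm_mul_le _ _) (norm_nonneg _))
  have key : cfc f x * z * cfc g y =
      (cfc f x - Polynomial.aeval x p) * z * cfc g y + Polynomial.aeval x p * z * (cfc g y - Polynomial.aeval y q)
        + Polynomial.aeval x p * z * Polynomial.aeval y q := by noncomm_ring
  have ht3 : ‖Polynomial.aeval x p * z * Polynomial.aeval y q‖ ≤ S1 * S2 * ‖x * z * y‖ :=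
    poly_prod_norm_le p q hp0 hq0 x y z hx1 hy1
  have hS12ε : S1 * S2 * (δ / (4 * (S1 * S2 + 1))) < δ / 4 := by
    rw [mul_div_assoc']
    rw [div_lt_div_iff₀ (by positivity) (by norm_num)]
    nlinarith
  calc ‖cfc f x * z * cfc g y‖
      ≤ ‖(cfc f x - Polynomial.aeval x p) * z * cfc g y‖ + ‖Polynomial.aeval x p * z * (cfc g y - Polynomial.aeval y q)‖
        + ‖Polynomial.aeval x p * z * Polynomial.aeval y q‖ := by
        rw [key]; exact (norm_add_le _ _).trans (by gcongr; exact norm_add_le _ _)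
    _ ≤ (2 * η) * 1 * 1 + 2 * 1 * (2 * η) + S1 * S2 * ‖x * z * y‖ := by
        have b1 : ‖(cfc f x - Polynomial.aeval x p) * z * cfc g y‖ ≤ (2 * η) * 1 * 1 :=
          (hmul _ _ _).trans (by
            gcongr <;> first | exact hdf | exact hz1 | exact hgy)
        have b2 : ‖Polynomial.aeval x p * z * (cfc g y - Polynomial.aeval y q)‖ ≤ 2 * 1 * (2 * η) :=
          (hmul _ _ _).trans (by
            gcongr <;> first | exact hpx | exact hz1 | exact hdg)
        exact add_le_add (add_le_add b1 b2) ht3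
    _ < (2 * η) * 1 * 1 + 2 * 1 * (2 * η) + δ / 4 := by
        have : S1 * S2 * ‖x * z * y‖ ≤ S1 * S2 * (δ / (4 * (S1 * S2 + 1))) :=
          mul_le_mul_of_nonneg_left hlt.le (by positivity)
        linarith
    _ ≤ δ := by
        have : 6 * η ≤ 6 * (δ / 8) := by linarith
        linarith


end
end
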